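/- For all n ≥ 1 and k ≥ 1, the number of words σ : Fin n → Fin k avoiding the multi-pattern 1-1'2' (i.e., containing no indices i < j with j + 1 < n such that σ(j) < σ(j+1); equivalently, σ(1) ≥ σ(2) ≥ … ≥ σ(n−1), the word with its first letter removed is weakly decreasing) equals k·C(n + k − 2, n − 1), where C denotes the binomial coefficient. -/

import Mathlib

/-- Monotone functions `Fin m → Fin k` are in bijection with `Sym (Fin k) m`. -/
def monoEquivSym (m k : ℕ) : {f : Fin m → Fin k // Monotone f} ≃ Sym (Fin k) m where
  toFun f := ⟨Multiset.map f.1 Finset.univ.val, by simp⟩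
  invFun s :=
    ⟨fun i => (Multiset.sort s.1 (· ≤ ·)).get
      (Fin.cast (by rw [Multiset.length_sort, s.2] :
          (Multiset.sort s.1 (· ≤ ·)).length = m).symm i),
      by
      intro a b hab
      rcases eq_or_lt_of_le hab with h | h
      · subst h; exact le_rfl
      · exact (Multiset.pairwise_sort s.1 (· ≤ ·)).rel_get_of_lt h⟩
  left_inv := by
    rintro ⟨f, hf⟩
    have key : Multiset.sort (Multiset.map f Finset.univ.val) (· ≤ ·) = List.ofFn f := by
      haveI : IsAntisymm (Fin k) (· ≤ ·) := ⟨fun a b h1 h2 => le_antisymm h1 h2⟩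
      apply List.Perm.eq_of_pairwise' (r := (· ≤ ·)) (l₂ := List.ofFn f)
      rotate_right
      · apply Multiset.coe_eq_coe.mp
        rw [Multiset.sort_eq, Fin.univ_val_map]
      · exact Multiset.pairwise_sort _ _
      · rw [← List.sortedLE_iff_pairwise, List.sortedLE_ofFn_iff]; exact hf
    ext i
    dsimp only
    rw [List.get_eq_getElem]
    simp only [key, Fin.coe_cast, List.getElem_ofFn]
  right_inv := by
    rintro ⟨s, hs⟩
    apply Subtype.ext
    simp only [Fin.univ_val_map]
    have h1 : (↑(Multiset.sort s (· ≤ ·)) : Multiset (Fin k)) = s := Multiset.sort_eq _ _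
    conv_rhs => rw [← h1]
    congr 1
    apply List.ext_getElem
    · simp [hs]
    · intro j hj1 hj2
      simp

theorem card_antitone (m k : ℕ) :
    Nat.card {f : Fin m → Fin k // Antitone f} = (k + m - 1).choose m := by
  have e : {f : Fin m → Fin k // Antitone f} ≃ {f : Fin m → Fin k // Monotone f} :=
    { toFun := fun f => ⟨f.1 ∘ Fin.rev, fun a b hab => f.2 (Fin.rev_le_rev.mpr hab)⟩
      invFun := fun f => ⟨f.1 ∘ Fin.rev, fun a b hab => f.2 (Fin.rev_le_rev.mpr hab)⟩
      left_inv := fun f => by ext i; simp [Fin.rev_rev]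
      right_inv := fun f => by ext i; simp [Fin.rev_rev] }
  rw [Nat.card_congr (e.trans (monoEquivSym m k)), Nat.card_eq_fintype_card,
    Sym.card_sym_eq_choose]
  simp

theorem stmt8 (n k : ℕ) (hn : 1 ≤ n) (hk : 1 ≤ k) :
    Nat.card {σ : Fin n → Fin k //
        ¬ ∃ (i j : ℕ) (h : j + 1 < n),
            i < j ∧ σ ⟨j, Nat.lt_of_succ_lt h⟩ < σ ⟨j + 1, h⟩} =
      k * Nat.choose (n + k - 2) (n - 1) := by
  obtain ⟨m, rfl⟩ : ∃ m, n = m + 1 := ⟨n - 1, (Nat.succ_pred_eq_of_pos hn).symm⟩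
  have e : {σ : Fin (m + 1) → Fin k //
        ¬ ∃ (i j : ℕ) (h : j + 1 < m + 1),
            i < j ∧ σ ⟨j, Nat.lt_of_succ_lt h⟩ < σ ⟨j + 1, h⟩} ≃
      Fin k × {f : Fin m → Fin k // Antitone f} := by
    exact
      { toFun := fun σfull => ⟨σfull.1 0, fun i => σfull.1 i.succ, by
          obtain ⟨σ, hσ⟩ := σfull
          show Antitone fun i : Fin m => σ i.succ
          intro a b hab
          obtain ⟨d, hd⟩ : ∃ d, (b : ℕ) = a + d := ⟨b - a, by omega⟩
          clear hab
          have key : ∀ d, ∀ b : Fin m, (b : ℕ) = a + d → σ b.succ ≤ σ a.succ := by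
            intro d
            induction d with
            | zero =>
              intro b hd
              have hab : a = b := Fin.ext (by omega)
              subst hab
              exact le_rfl
            | succ d ih =>
              intro b hd
              have hb1 : (b : ℕ) - 1 < m := by omega
              have step : σ b.succ ≤ σ (Fin.succ ⟨(b : ℕ) - 1, hb1⟩) := by
                by_contra hcon
                rw [not_le] at hcon
                apply hσ
                refine ⟨(b : ℕ) - 1, (b : ℕ), by omega, by omega, ?_⟩
                convert hcon using 2
                · rfl
                all_goals simp [Fin.ext_iff] <;> omega
              exact le_trans step (ih ⟨(b : ℕ) - 1, hb1⟩ (by simp; omega))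
          exact key d b hd⟩
        invFun := fun p => ⟨Fin.cases p.1 p.2.1, by
          rintro ⟨i, j, hj, hij, hlt⟩
          obtain ⟨j', rfl⟩ : ∃ j' : ℕ, j = j' + 1 := ⟨j - 1, by omega⟩
          have h1 : (⟨j' + 1, Nat.lt_of_succ_lt hj⟩ : Fin (m + 1)) =
              Fin.succ ⟨j', by omega⟩ := by simp [Fin.ext_iff]
          have h2 : (⟨j' + 1 + 1, hj⟩ : Fin (m + 1)) = Fin.succ ⟨j' + 1, by omega⟩ := by
            simp [Fin.ext_iff]
          rw [h1, h2] at hlt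
          simp only [Fin.cases_succ] at hlt
          exact absurd (p.2.2 (a := ⟨j', by omega⟩) (b := ⟨j' + 1, by omega⟩)
            (by simp [Fin.le_def])) (not_le.mpr hlt)⟩
        left_inv := fun σ => by
          ext i
          dsimp only
          cases i using Fin.cases with
          | zero => rfl
          | succ j => rfl
        right_inv := fun p => by
          simp }
  rw [Nat.card_congr e, Nat.card_eq_fintype_card, Fintype.card_prod, Fintype.card_fin,
    ← Nat.card_eq_fintype_card, card_antitone]
  have h3 : m + 1 + k - 2 = k + m - 1 := by omega
  have h4 : m + 1 - 1 = m := by omega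
  rw [h3, h4]
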